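/- Let a, b, c be real with c ≠ 0, and suppose x₀ ≠ ln|c| is a real number such that λ = x₀ + iy (y real, y > 0) is a root of λ + cλe^{-λ} + a + be^{-λ} = 0. Then y ∉ {2kπ + π : k ∈ ℤ}. -/
import Mathlib


open Complex Real

theorem stmt_11 (a b c : ℝ) (hc : c ≠ 0) (x₀ y : ℝ)
    (hx : x₀ ≠ Real.log |c|) (hy : 0 < y)
    (hroot :
      ((x₀ : ℂ) + Complex.I * y) +
        (c : ℂ) * ((x₀ : ℂ) + Complex.I * y) * Complex.exp (-((x₀ : ℂ) + Complex.I * y)) +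
        (a : ℂ) + (b : ℂ) * Complex.exp (-((x₀ : ℂ) + Complex.I * y)) = 0) :
    ∀ k : ℤ, y ≠ 2 * k * π + π := by
  intro k hk
  apply hx
  have hcos : Real.cos y = -1 := by
    rw [hk, show 2 * (k:ℝ) * π + π = (k:ℝ) * (2*π) + π by ring]
    exact Real.cos_int_mul_two_pi_add_pi k
  have hsin : Real.sin y = 0 := by
    rw [hk, show 2 * (k:ℝ) * π + π = ((2*k+1 : ℤ):ℝ) * π by push_cast; ring]
    exact Real.sin_int_mul_pi _
  have h1 : Complex.exp (-((x₀ : ℂ) + Complex.I * y)) = -Real.exp (-x₀) := by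
    rw [show -((x₀:ℂ) + Complex.I * y) = ((-x₀ : ℝ):ℂ) + ((-y : ℝ):ℂ) * Complex.I by
      push_cast; ring]
    rw [Complex.exp_add, Complex.exp_mul_I]
    rw [← Complex.ofReal_cos, ← Complex.ofReal_sin, Real.cos_neg, Real.sin_neg, hcos, hsin,
      ← Complex.ofReal_exp]
    push_cast
    ring
  rw [h1] at hroot
  have him := congrArg Complex.im hroot
  simp [Complex.add_im, Complex.mul_im, Complex.mul_re, ← Complex.ofReal_neg,
    Complex.exp_ofReal_re, Complex.exp_ofReal_im] at him
  have hy' : y * (1 - c * Real.exp (-x₀)) = 0 := by ring_nf; ring_nf at him; linarith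
  have hce : c * Real.exp (-x₀) = 1 := by
    rcases mul_eq_zero.mp hy' with h | h
    · exact absurd h (ne_of_gt hy)
    · linarith
  have hcpos : c = Real.exp x₀ := by
    have h2 := Real.exp_pos (-x₀)
    have h3 : c = 1 / Real.exp (-x₀) := by field_simp; linarith
    rw [h3, Real.exp_neg]
    field_simp
  rw [hcpos, abs_of_pos (Real.exp_pos x₀), Real.log_exp]
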